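/- Let m, n ≥ 1, let H₀ ∈ ℂ^{l×m} and H₁ ∈ ℂ^{n×m}, let P₀, P₁ > 0 and γ₂⋆ ≥ 0. Suppose ν₁, ν₂ ≥ 0 and the unit vector e₁ ∈ ℂ^m satisfy ν₁²|e₁ᴴs|² ≤ ‖H₀s‖² ≤ ν₁²|e₁ᴴs|² + ν₂² for every unit vector s ∈ ℂ^m. Define F(a, b) = ab/(1 + a + b), γ(s) = F(P₁‖H₁s‖², γ₂⋆) + P₀‖H₀s‖², and ξ(s) = F(P₁‖H₁s‖², γ₂⋆) + P₀ν₁²|e₁ᴴs|². If s_mod is a unit vector attaining the supremum of ξ over the unit sphere of ℂ^m, then sup{ γ(s) : ‖s‖ = 1 } ≤ γ(s_mod) + P₀ν₂². -/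

import Mathlib

/-- Euclidean norm of a complex vector. -/
noncomputable def cnorm {k : ℕ} (v : Fin k → ℂ) : ℝ :=
  Real.sqrt (∑ i, ‖v i‖ ^ 2)

/-- End-to-end two-hop relay SNR with hop SNRs `a`, `b`. -/
noncomputable def snrF (a b : ℝ) : ℝ := a * b / (1 + a + b)

/-- SNR loss bound for the modified (rank-one direct-link) scheme: if
`ν₁²|e₁ᴴs|² ≤ ‖H₀s‖² ≤ ν₁²|e₁ᴴs|² + ν₂²` for all unit `s`, and the unit vector `s_mod`
maximizes `ξ(s) = F(P₁‖H₁s‖², γ₂⋆) + P₀ν₁²|e₁ᴴs|²` over the unit sphere, then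
`sup{γ(s) : ‖s‖ = 1} ≤ γ(s_mod) + P₀ν₂²`, where
`γ(s) = F(P₁‖H₁s‖², γ₂⋆) + P₀‖H₀s‖²`. -/
theorem stmt19 (m n l : ℕ) (hm : 1 ≤ m) (hn : 1 ≤ n)
    (H₀ : Matrix (Fin l) (Fin m) ℂ) (H₁ : Matrix (Fin n) (Fin m) ℂ)
    (P₀ P₁ : ℝ) (hP₀ : 0 < P₀) (hP₁ : 0 < P₁)
    (γ₂ : ℝ) (hγ₂ : 0 ≤ γ₂)
    (ν₁ ν₂ : ℝ) (hν₁ : 0 ≤ ν₁) (hν₂ : 0 ≤ ν₂)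
    (e₁ : Fin m → ℂ) (he₁ : cnorm e₁ = 1)
    (hbound : ∀ s : Fin m → ℂ, cnorm s = 1 →
      ν₁ ^ 2 * ‖dotProduct (star e₁) s‖ ^ 2 ≤ cnorm (H₀.mulVec s) ^ 2 ∧
      cnorm (H₀.mulVec s) ^ 2 ≤ ν₁ ^ 2 * ‖dotProduct (star e₁) s‖ ^ 2 + ν₂ ^ 2)
    (smod : Fin m → ℂ) (hsmod : cnorm smod = 1)
    (hattain : ∀ s : Fin m → ℂ, cnorm s = 1 →
      snrF (P₁ * cnorm (H₁.mulVec s) ^ 2) γ₂ +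
          P₀ * ν₁ ^ 2 * ‖dotProduct (star e₁) s‖ ^ 2 ≤
        snrF (P₁ * cnorm (H₁.mulVec smod) ^ 2) γ₂ +
          P₀ * ν₁ ^ 2 * ‖dotProduct (star e₁) smod‖ ^ 2) :
    sSup {x : ℝ | ∃ s : Fin m → ℂ, cnorm s = 1 ∧
        x = snrF (P₁ * cnorm (H₁.mulVec s) ^ 2) γ₂ + P₀ * cnorm (H₀.mulVec s) ^ 2} ≤
      (snrF (P₁ * cnorm (H₁.mulVec smod) ^ 2) γ₂ + P₀ * cnorm (H₀.mulVec smod) ^ 2) +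
        P₀ * ν₂ ^ 2 := by
  have hcn : ∀ {k : ℕ} (v : Fin k → ℂ), 0 ≤ cnorm v := fun v => Real.sqrt_nonneg _
  have hF : ∀ a b : ℝ, 0 ≤ a → 0 ≤ b → 0 ≤ snrF a b := by
    intro a b ha hb
    unfold snrF
    apply div_nonneg (mul_nonneg ha hb)
    linarith
  have hFmod : 0 ≤ snrF (P₁ * cnorm (H₁.mulVec smod) ^ 2) γ₂ :=
    hF _ _ (mul_nonneg hP₁.le (sq_nonneg _)) hγ₂
  apply Real.sSup_le
  · rintro x ⟨s, hs, rfl⟩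
    have h1 := (hbound s hs).2
    have h2 := (hbound smod hsmod).1
    have h3 := hattain s hs
    nlinarith [hF (P₁ * cnorm (H₁.mulVec s) ^ 2) γ₂ (mul_nonneg hP₁.le (sq_nonneg _)) hγ₂]
  · have := sq_nonneg (cnorm (H₀.mulVec smod))
    nlinarith [sq_nonneg ν₂]
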